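/- arXiv:1006.4873 — 4 statements merged into one kernel-verified Lean document; each statement's English description precedes it below -/
import Mathlib

section
/- Let S be a Hausdorff semitopological semigroup with the FS-property. If the topological space S has at least one isolated point, then S is discrete. -/
/-- A semigroup `S` has the `S`-property if for all `a, b ∈ S` there are
`c, d ∈ S¹` with `c·a·d = b`. -/
def SProperty (S : Type*) [Semigroup S] : Prop :=
  ∀ a b : S, ∃ c d : WithOne S, c * (a : WithOne S) * d = (b : WithOne S)

/-- A semigroup `S` has the `F`-property if for all `a, b, c, d ∈ S¹` the
sets `{x ∈ S | a·x = b}` and `{x ∈ S | x·c = d}` are finite. -/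
def FProperty (S : Type*) [Semigroup S] : Prop :=
  (∀ a b : WithOne S, {x : S | a * (x : WithOne S) = b}.Finite) ∧
  (∀ c d : WithOne S, {x : S | (x : WithOne S) * c = d}.Finite)

lemma aux_left {S : Type*} [Semigroup S] [TopologicalSpace S]
    (hl : ∀ a : S, Continuous fun x : S => a * x)
    (h1 : ∀ a b : WithOne S, {x : S | a * (x : WithOne S) = b}.Finite)
    (c : WithOne S) :
    ∃ g : S → S, Continuous g ∧ (∀ x : S, c * (x : WithOne S) = (g x : WithOne S)) ∧
      ∀ y : S, {x : S | g x = y}.Finite := by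
  induction c using WithOne.recOneCoe with
  | one =>
    exact ⟨id, continuous_id, fun x => one_mul _,
      fun y => (Set.finite_singleton y).subset (by intro x hx; simpa using hx)⟩
  | coe c =>
    refine ⟨fun x => c * x, hl c, fun x => (WithOne.coe_mul c x).symm, fun y => ?_⟩
    refine (h1 (c : WithOne S) (y : WithOne S)).subset ?_
    intro x hx
    simp only [Set.mem_setOf_eq] at hx ⊢
    rw [← WithOne.coe_mul, hx]

lemma aux_right {S : Type*} [Semigroup S] [TopologicalSpace S]
    (hr : ∀ a : S, Continuous fun x : S => x * a)
    (h2 : ∀ c d : WithOne S, {x : S | (x : WithOne S) * c = d}.Finite)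
    (d : WithOne S) :
    ∃ g : S → S, Continuous g ∧ (∀ x : S, (x : WithOne S) * d = (g x : WithOne S)) ∧
      ∀ y : S, {x : S | g x = y}.Finite := by
  induction d using WithOne.recOneCoe with
  | one =>
    exact ⟨id, continuous_id, fun x => mul_one _,
      fun y => (Set.finite_singleton y).subset (by intro x hx; simpa using hx)⟩
  | coe d =>
    refine ⟨fun x => x * d, hr d, fun x => (WithOne.coe_mul x d).symm, fun y => ?_⟩
    refine (h2 (d : WithOne S) (y : WithOne S)).subset ?_
    intro x hx
    simp only [Set.mem_setOf_eq] at hx ⊢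
    rw [← WithOne.coe_mul, hx]

/-- A Hausdorff semitopological semigroup with the `FS`-property having an
isolated point is discrete. -/
theorem discrete_of_isolated_point {S : Type*} [Semigroup S]
    [TopologicalSpace S] [T2Space S]
    (hl : ∀ a : S, Continuous fun x : S => a * x)
    (hr : ∀ a : S, Continuous fun x : S => x * a)
    (hS : SProperty S) (hF : FProperty S)
    (hiso : ∃ t : S, IsOpen ({t} : Set S)) :
    DiscreteTopology S := by
  obtain ⟨t, ht⟩ := hiso
  rw [discreteTopology_iff_isOpen_singleton]
  intro b
  obtain ⟨c, d, hcd⟩ := hS b t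
  obtain ⟨gl, hglc, hgl, hglf⟩ := aux_left hl hF.1 c
  obtain ⟨gr, hgrc, hgr, hgrf⟩ := aux_right hr hF.2 d
  set U : Set S := {x | gr (gl x) = t} with hU
  have hUopen : IsOpen U := ht.preimage (hgrc.comp hglc)
  have hbU : b ∈ U := by
    have h : ((gr (gl b) : S) : WithOne S) = (t : WithOne S) := by
      rw [← hgr, ← hgl, hcd]
    exact WithOne.coe_inj.mp h
  have hUfin : U.Finite := by
    have hsub : U ⊆ ⋃ y ∈ {x : S | gr x = t}, {x : S | gl x = y} := by
      intro x hx
      exact Set.mem_biUnion hx rfl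
    exact ((hgrf t).biUnion (fun y _ => hglf y)).subset hsub
  have hclosed : IsClosed (U \ {b}) := (hUfin.subset Set.diff_subset).isClosed
  have heq : ({b} : Set S) = U ∩ (U \ {b})ᶜ := by
    ext x
    simp only [Set.mem_singleton_iff, Set.mem_inter_iff, Set.mem_compl_iff,
      Set.mem_diff, not_and, not_not]
    constructor
    · rintro rfl; exact ⟨hbU, fun _ => rfl⟩
    · rintro ⟨hx, h⟩; exact h hx
  rw [heq]
  exact hUopen.inter hclosed.isOpen_compl
end

section
/- Let S be a countable semigroup with the FS-property. Then every topology τ on S such that (S, τ) is a Hausdorff semitopological semigroup and (S, τ) is a Baire space is the discrete topology. -/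
/-- Every Hausdorff Baire topology on a countable semigroup with the
`FS`-property for which multiplication is separately continuous is
discrete. -/
theorem discrete_of_countable_Baire {S : Type*} [Semigroup S] [Countable S]
    [TopologicalSpace S] [T2Space S] [BaireSpace S]
    (hl : ∀ a : S, Continuous fun x : S => a * x)
    (hr : ∀ a : S, Continuous fun x : S => x * a)
    (hS : SProperty S) (hF : FProperty S) :
    DiscreteTopology S := by
  rcases isEmpty_or_nonempty S with hE | hN
  · exact discreteTopology_iff_isOpen_singleton.mpr (fun a => (hE.false a).elim)
  -- left multiplication by an element of `WithOne S`, realized as a continuous map `S → S`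
  have hleft : ∀ c : WithOne S, ∃ g : S → S, Continuous g ∧
      ∀ x : S, (g x : WithOne S) = c * (x : WithOne S) := by
    intro c
    induction c using WithOne.recOneCoe with
    | one => exact ⟨id, continuous_id, fun x => (one_mul _).symm⟩
    | coe c' => exact ⟨fun x => c' * x, hl c', fun x => (WithOne.coe_mul c' x).symm⟩
  have hright : ∀ d : WithOne S, ∃ g : S → S, Continuous g ∧
      ∀ x : S, (g x : WithOne S) = (x : WithOne S) * d := by
    intro d
    induction d using WithOne.recOneCoe with
    | one => exact ⟨id, continuous_id, fun x => (mul_one _).symm⟩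
    | coe d' => exact ⟨fun x => x * d', hr d', fun x => (WithOne.coe_mul x d').symm⟩
  -- there exists an isolated point
  obtain ⟨a, ha⟩ : ∃ a : S, IsOpen ({a} : Set S) := by
    obtain ⟨a, ha⟩ := nonempty_interior_of_iUnion_of_closed
      (f := fun x : S => ({x} : Set S)) (fun x => isClosed_singleton)
      (by ext x; simp)
    refine ⟨a, ?_⟩
    have hsub : interior ({a} : Set S) = {a} :=
      Set.Subset.antisymm interior_subset (Set.singleton_subset_iff.mpr (by
        obtain ⟨y, hy⟩ := ha
        have hya : y ∈ ({a} : Set S) := interior_subset hy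
        rwa [Set.mem_singleton_iff.mp hya] at hy))
    rw [← hsub]; exact isOpen_interior
  -- every singleton is open
  refine discreteTopology_iff_isOpen_singleton.mpr (fun b => ?_)
  obtain ⟨c, d, hcd⟩ := hS b a
  obtain ⟨g₁, hg₁c, hg₁⟩ := hleft c
  obtain ⟨g₂, hg₂c, hg₂⟩ := hright d
  set h : S → S := fun x => g₂ (g₁ x) with hh
  have hhx : ∀ x : S, (h x : WithOne S) = c * (x : WithOne S) * d := by
    intro x; rw [hh]; simp only; rw [hg₂, hg₁]
  have hhc : Continuous h := hg₂c.comp hg₁c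
  -- the fiber of `h` over `a` is open
  have hTopen : IsOpen (h ⁻¹' {a}) := ha.preimage hhc
  have hbT : b ∈ h ⁻¹' {a} := by
    have : (h b : WithOne S) = (a : WithOne S) := by rw [hhx b, hcd]
    simpa using WithOne.coe_inj.mp this
  -- the fiber of `h` over `a` is finite
  have hTfin : (h ⁻¹' {a}).Finite := by
    have hsub : h ⁻¹' {a} ⊆ ⋃ y ∈ {y : S | (y : WithOne S) * d = (a : WithOne S)},
        {x : S | c * (x : WithOne S) = (y : WithOne S)} := by
      intro x hx
      simp only [Set.mem_preimage, Set.mem_singleton_iff] at hx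
      refine Set.mem_biUnion (show (g₁ x : WithOne S) * d = (a : WithOne S) from ?_) ?_
      · rw [← hg₂ (g₁ x)]
        exact WithOne.coe_inj.mpr hx
      · exact (hg₁ x).symm
    exact Set.Finite.subset ((hF.2 d a).biUnion (fun y _ => hF.1 c y)) hsub
  -- a finite open set containing `b` in a T1 space yields `{b}` open
  have hdiff : IsOpen ((h ⁻¹' {a}) \ ((h ⁻¹' {a}) \ {b})) :=
    hTopen.sdiff (Set.Finite.isClosed (hTfin.subset Set.diff_subset))
  have : (h ⁻¹' {a}) \ ((h ⁻¹' {a}) \ {b}) = {b} := by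
    ext x
    simp only [Set.mem_diff, Set.mem_singleton_iff]
    constructor
    · rintro ⟨hx, hx2⟩
      by_contra hne
      exact hx2 ⟨hx, hne⟩
    · rintro rfl
      exact ⟨hbT, fun h' => h'.2 rfl⟩
  rwa [this] at hdiff
end

section
/- Let S be a countable semilattice (a commutative semigroup in which every element is idempotent) with the F-property, equipped with a topology τ such that (S, τ) is a Hausdorff semitopological semigroup and for every s ∈ S at least one of the principal ideals s·S and S·s is a Baire space in the subspace topology. Then τ is the discrete topology. -/
/-- In a T1 space, every point of a finite open set is isolated. -/
lemma isOpen_singleton_of_mem_finite_open {S : Type*} [TopologicalSpace S] [T1Space S]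
    {F : Set S} (hfin : F.Finite) (hop : IsOpen F) {x : S} (hx : x ∈ F) :
    IsOpen ({x} : Set S) := by
  have h1 : IsClosed (F \ {x}) := (hfin.subset Set.diff_subset).isClosed
  have h2 : F \ (F \ {x}) = {x} := by
    ext y; simp only [Set.mem_diff, Set.mem_singleton_iff]
    constructor
    · rintro ⟨hyF, hy⟩; by_contra h; exact hy ⟨hyF, h⟩
    · rintro rfl; exact ⟨hx, fun h => h.2 rfl⟩
  have := hop.sdiff h1
  rwa [h2] at this

/-- A countable Hausdorff semitopological semilattice with the `F`-property
in which, for every `s`, one of the principal ideals `s·S`, `S·s` is a Baire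
space, is discrete. -/
theorem discrete_semilattice_of_I_Baire {S : Type*} [CommSemigroup S]
    [Countable S] [TopologicalSpace S] [T2Space S]
    (hidem : ∀ x : S, x * x = x)
    (hl : ∀ a : S, Continuous fun x : S => a * x)
    (hr : ∀ a : S, Continuous fun x : S => x * a)
    (hF : FProperty S)
    (hBaire : ∀ s : S,
      BaireSpace {x : S | ∃ t : S, s * t = x} ∨
      BaireSpace {x : S | ∃ t : S, t * s = x}) :
    DiscreteTopology S := by
  rw [discreteTopology_iff_isOpen_singleton]
  intro s
  set I : Set S := {x : S | ∃ t : S, s * t = x} with hIdef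
  have hII : {x : S | ∃ t : S, t * s = x} = I := by
    ext x; simp only [hIdef, Set.mem_setOf_eq, mul_comm]
  haveI hBI : BaireSpace I := by
    rcases hBaire s with h | h
    · exact h
    · rwa [hII] at h
  have hmemI : ∀ x ∈ I, s * x = x := by
    rintro x ⟨t, rfl⟩
    rw [← mul_assoc, hidem]
  have hsI : s ∈ I := ⟨s, hidem s⟩
  haveI : Nonempty I := ⟨⟨s, hsI⟩⟩
  -- countable Baire space: some singleton has nonempty interior
  obtain ⟨x₀, hx₀⟩ : ∃ x₀ : I, (interior ({x₀} : Set I)).Nonempty := by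
    apply nonempty_interior_of_iUnion_of_closed (f := fun i : I => ({i} : Set I))
    · exact fun i => isClosed_singleton
    · ext y; simp
  have hx₀open : IsOpen ({x₀} : Set I) := by
    obtain ⟨y, hy⟩ := hx₀
    have hy' : y = x₀ := Set.eq_of_mem_singleton ((interior_subset : interior ({x₀} : Set I) ⊆ {x₀}) hy)
    have : interior ({x₀} : Set I) = {x₀} :=
      Set.Subset.antisymm interior_subset (Set.singleton_subset_iff.2 (hy' ▸ hy))
    rw [← this]; exact isOpen_interior
  obtain ⟨V, hVopen, hVeq⟩ := isOpen_induced_iff.mp hx₀open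
  -- A = preimage of V under y ↦ s*y equals {y | s*y = x₀}
  have hx₀I : (x₀ : S) ∈ I := x₀.2
  have hAeq : (fun y : S => s * y) ⁻¹' V = {y : S | s * y = (x₀ : S)} := by
    ext y
    simp only [Set.mem_preimage, Set.mem_setOf_eq]
    constructor
    · intro hv
      have hmem : s * y ∈ I := ⟨y, rfl⟩
      have : (⟨s * y, hmem⟩ : I) ∈ Subtype.val ⁻¹' V := hv
      rw [hVeq] at this
      exact congrArg Subtype.val this
    · intro h
      have : (x₀ : S) ∈ V := by
        have : x₀ ∈ Subtype.val ⁻¹' V := by rw [hVeq]; rfl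
        exact this
      rwa [h]
  have hAopen : IsOpen {y : S | s * y = (x₀ : S)} := by
    rw [← hAeq]; exact hVopen.preimage (hl s)
  have hAfin : Set.Finite {y : S | s * y = (x₀ : S)} := by
    have heq : {y : S | s * y = (x₀ : S)} =
        {y : S | (s : WithOne S) * (y : WithOne S) = ((x₀ : S) : WithOne S)} := by
      ext y; simp [← WithOne.coe_mul]
    rw [heq]; exact hF.1 _ _
  have hx₀mem : (x₀ : S) ∈ {y : S | s * y = (x₀ : S)} := hmemI _ hx₀I
  have hx₀iso : IsOpen ({(x₀ : S)} : Set S) :=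
    isOpen_singleton_of_mem_finite_open hAfin hAopen hx₀mem
  -- B = up-set of x₀
  have hBopen : IsOpen {y : S | (x₀ : S) * y = (x₀ : S)} := by
    have : {y : S | (x₀ : S) * y = (x₀ : S)} =
        (fun y : S => (x₀ : S) * y) ⁻¹' {(x₀ : S)} := rfl
    rw [this]; exact hx₀iso.preimage (hl _)
  have hBfin : Set.Finite {y : S | (x₀ : S) * y = (x₀ : S)} := by
    have heq : {y : S | (x₀ : S) * y = (x₀ : S)} =
        {y : S | ((x₀ : S) : WithOne S) * (y : WithOne S) = ((x₀ : S) : WithOne S)} := by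
      ext y; simp [← WithOne.coe_mul]
    rw [heq]; exact hF.1 _ _
  have hsB : s ∈ {y : S | (x₀ : S) * y = (x₀ : S)} := by
    show (x₀ : S) * s = (x₀ : S)
    rw [mul_comm]; exact hmemI _ hx₀I
  exact isOpen_singleton_of_mem_finite_open hBfin hBopen hsB
end

section
/- Let S be a Hausdorff topological semigroup (multiplication jointly continuous) containing a dense discrete subspace A such that for all a, b ∈ A the sets {x ∈ A : a·x = b} and {y ∈ A : y·a = b} are finite. Then I = S \ A is a two-sided ideal of S (provided it is nonempty): S·I ⊆ I, I·S ⊆ I. -/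
/-- If a Hausdorff topological semigroup `S` contains a dense discrete
subspace `A` such that for all `a, b ∈ A` the equations `a·x = b` and
`y·a = b` have only finitely many solutions in `A`, then the complement
`I = S \ A` is a two-sided ideal of `S`. -/
theorem complement_of_dense_discrete_is_ideal {S : Type*} [Semigroup S]
    [TopologicalSpace S] [T2Space S]
    (hc : Continuous fun p : S × S => p.1 * p.2)
    (A : Set S) (hdense : Dense A)
    (hdisc : ∀ a ∈ A, ∃ U : Set S, IsOpen U ∧ U ∩ A = {a})
    (hfin : ∀ a ∈ A, ∀ b ∈ A,
      {x ∈ A | a * x = b}.Finite ∧ {y ∈ A | y * a = b}.Finite) :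
    ∀ x ∈ Aᶜ, ∀ s : S, s * x ∈ Aᶜ ∧ x * s ∈ Aᶜ := by
  -- First: every point of A is isolated in S.
  have hiso : ∀ a ∈ A, IsOpen ({a} : Set S) := by
    intro a ha
    obtain ⟨U, hU, hUA⟩ := hdisc a ha
    have haU : a ∈ U := by
      have : a ∈ U ∩ A := hUA ▸ rfl
      exact this.1
    have hempty : U \ {a} = ∅ := by
      by_contra h
      obtain ⟨z, hzA, hzU⟩ := hdense.exists_mem_open (hU.sdiff isClosed_singleton)
        (Set.nonempty_iff_ne_empty.2 h)
      have : z ∈ U ∩ A := ⟨hzU.1, hzA⟩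
      rw [hUA] at this
      exact hzU.2 this
    have : U = {a} := by
      apply Set.eq_singleton_iff_unique_mem.2
      refine ⟨haU, fun y hy => ?_⟩
      by_contra hne
      exact absurd (Set.eq_empty_iff_forall_notMem.1 hempty y ⟨hy, hne⟩) (fun h => h)
    exact this ▸ hU
  intro x hx s
  constructor
  · -- s * x ∉ A
    by_contra h
    have hb : s * x ∈ A := not_not.mp h
    have hopen : IsOpen ((fun p : S × S => p.1 * p.2) ⁻¹' {s * x}) :=
      (hiso _ hb).preimage hc
    obtain ⟨V, W, hV, hW, hsV, hxW, hVW⟩ :=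
      isOpen_prod_iff.1 hopen s x rfl
    obtain ⟨a, haA, haV⟩ := hdense.exists_mem_open hV ⟨s, hsV⟩
    have hF := (hfin a haA (s * x) hb).1
    have hxW' : x ∈ W \ {w ∈ A | a * w = s * x} := ⟨hxW, fun hc' => hx hc'.1⟩
    obtain ⟨w, hwA, hwW'⟩ := hdense.exists_mem_open (hW.sdiff hF.isClosed)
      ⟨x, hxW'⟩
    have : a * w = s * x := Set.mem_singleton_iff.mp (hVW (Set.mk_mem_prod haV hwW'.1))
    exact hwW'.2 ⟨hwA, this⟩
  · -- x * s ∉ A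
    by_contra h
    have hb : x * s ∈ A := not_not.mp h
    have hopen : IsOpen ((fun p : S × S => p.1 * p.2) ⁻¹' {x * s}) :=
      (hiso _ hb).preimage hc
    obtain ⟨W, V, hW, hV, hxW, hsV, hVW⟩ :=
      isOpen_prod_iff.1 hopen x s rfl
    obtain ⟨a, haA, haV⟩ := hdense.exists_mem_open hV ⟨s, hsV⟩
    have hF := (hfin a haA (x * s) hb).2
    have hxW' : x ∈ W \ {w ∈ A | w * a = x * s} := ⟨hxW, fun hc' => hx hc'.1⟩
    obtain ⟨w, hwA, hwW'⟩ := hdense.exists_mem_open (hW.sdiff hF.isClosed)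
      ⟨x, hxW'⟩
    have : w * a = x * s := Set.mem_singleton_iff.mp (hVW (Set.mk_mem_prod hwW'.1 haV))
    exact hwW'.2 ⟨hwA, this⟩
end
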